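/- For all real numbers a and c, the k-vector space Hom_Sh(k_{[a,∞)}, k_{[c,∞)}) is one-dimensional (isomorphic to k) if a ≤ c, and is zero if c < a. (This is the case b = d = +∞ of the Hom computation in the paper's Lemma on interval sheaves: Hom(k_{[a,b)}, k_{[c,d)}) ≅ k if a ≤ c < b ≤ d and 0 otherwise.) -/

import Mathlib

/-
Common setup: the abelian category `Sh k` of sheaves of `k`-modules on `ℝ`, the sheaves
`k_{[a,∞)}` (pushforward to `ℝ` of the constant sheaf with stalk `k` on the subspace `[a,∞)`),
the canonical restriction morphisms `r_{a,b}` (pushforward along `[a,∞) ↪ ℝ` of the unit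
morphism from the constant sheaf on `[a,∞)` to the pushforward of its restriction along
`[b,∞) ↪ [a,∞)`), the half-open interval sheaves `k_{[a,b)} := ker r_{a,b}`, Ext groups,
stalks, and the constant sheaf `k_ℝ`.
-/

open CategoryTheory CategoryTheory.Limits TopCat TopologicalSpace

noncomputable section

/-- The category `Sh` of sheaves of `k`-modules on the real line `ℝ`. -/
abbrev Sh (k : Type) [Field k] :=
  CategoryTheory.Sheaf (Opens.grothendieckTopology (TopCat.of ℝ)) (ModuleCat.{0} k)

variable (k : Type) [Field k]

instance : HasExt.{1} (Sh k) := by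
  letI := HasDerivedCategory.standard (Sh k)
  exact hasExt_of_hasDerivedCategory _

instance (F G : Sh k) : SMul k (F ⟶ G) := ⟨fun c f => ⟨c • f.1⟩⟩

/-- The `k`-vector space structure on the Hom groups of `Sh k`. -/
instance (F G : Sh k) : Module k (F ⟶ G) :=
  Function.Injective.module k
    ({ toFun := fun f => f.1, map_zero' := rfl, map_add' := fun _ _ => rfl } :
      (F ⟶ G) →+ (F.1 ⟶ G.1))
    (fun _ _ h => Sheaf.hom_ext h) (fun _ _ => rfl)

/-- The subspace `[a,∞)` of `ℝ` as a topological space. -/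
abbrev IciSp (a : ℝ) : TopCat := TopCat.of (Set.Ici a)

/-- The closed inclusion `[a,∞) ↪ ℝ`. -/
def inclIci (a : ℝ) : IciSp a ⟶ TopCat.of ℝ := TopCat.ofHom ⟨Subtype.val, continuous_subtype_val⟩

/-- The closed inclusion `[b,∞) ↪ [a,∞)` for `a ≤ b`. -/
def inclIciIci {a b : ℝ} (h : a ≤ b) : IciSp b ⟶ IciSp a :=
  TopCat.ofHom ⟨fun x => ⟨x.1, le_trans h x.2⟩, Continuous.subtype_mk continuous_subtype_val _⟩

/-- The constant sheaf with stalk `k` on the subspace `[a,∞)`. -/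
def constIci (a : ℝ) : TopCat.Sheaf (ModuleCat.{0} k) (IciSp a) :=
  (constantSheaf (Opens.grothendieckTopology (IciSp a)) (ModuleCat.{0} k)).obj (ModuleCat.of k k)

/-- `k_{[a,∞)}`: the pushforward to `ℝ`, along the closed inclusion `[a,∞) ↪ ℝ`, of the
constant sheaf on the subspace `[a,∞)` with stalk `k`. -/
def kIci (a : ℝ) : Sh k :=
  (TopCat.Sheaf.pushforward (ModuleCat.{0} k) (inclIci a)).obj (constIci k a)

/-- The pushforward to `ℝ` along `[a,∞) ↪ ℝ` of the pushforward along `[b,∞) ↪ [a,∞)` of the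
restriction (pullback) of the constant sheaf on `[a,∞)`: the incarnation of `k_{[b,∞)}` which is
the codomain of the canonical restriction morphism `r_{a,b}`. -/
def kIciRes {a b : ℝ} (h : a ≤ b) : Sh k :=
  (TopCat.Sheaf.pushforward (ModuleCat.{0} k) (inclIci a)).obj
    ((TopCat.Sheaf.pushforward (ModuleCat.{0} k) (inclIciIci h)).obj
      ((TopCat.Sheaf.pullback (ModuleCat.{0} k) (inclIciIci h)).obj (constIci k a)))

/-- The canonical restriction morphism `r_{a,b} : k_{[a,∞)} ⟶ k_{[b,∞)}`: the pushforward along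
`[a,∞) ↪ ℝ` of the unit morphism from the constant sheaf on `[a,∞)` to the pushforward of its
restriction along the closed inclusion `[b,∞) ↪ [a,∞)`. -/
def res {a b : ℝ} (h : a ≤ b) : kIci k a ⟶ kIciRes k h :=
  (TopCat.Sheaf.pushforward (ModuleCat.{0} k) (inclIci a)).map
    ((TopCat.Sheaf.pullbackPushforwardAdjunction (ModuleCat.{0} k) (inclIciIci h)).unit.app
      (constIci k a))

/-- `k_{[a,b)}`: the kernel in `Sh k` of the restriction morphism `r_{a,b}`. -/
def kIco {a b : ℝ} (h : a < b) : Sh k := kernel (res k h.le)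

/-- The stalk at `x : ℝ` of a sheaf of `k`-modules on `ℝ`. -/
def stalkAt (F : Sh k) (x : ℝ) : ModuleCat k :=
  TopCat.Presheaf.stalk (C := ModuleCat.{0} k) (X := TopCat.of ℝ) F.1 x

/-- `k_ℝ`: the constant sheaf on `ℝ` with stalk `k`. -/
def kConst : Sh k :=
  (constantSheaf (Opens.grothendieckTopology (TopCat.of ℝ)) (ModuleCat.{0} k)).obj
    (ModuleCat.of k k)


/-! ### Auxiliary machinery -/

section Aux

open Opposite

variable {k}

/-- The constant presheaf with stalk `k` on a space `X`. -/
abbrev constPresh (k : Type) [Field k] (X : TopCat.{0}) : (Opens X)ᵒᵖ ⥤ ModuleCat.{0} k :=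
  (Functor.const _).obj (ModuleCat.of k k)

/-- The constant sheaf with stalk `k` on a space `X`. -/
abbrev CSh (k : Type) [Field k] (X : TopCat.{0}) : TopCat.Sheaf (ModuleCat.{0} k) X :=
  (constantSheaf (Opens.grothendieckTopology X) (ModuleCat.{0} k)).obj (ModuleCat.of k k)

/-- The sheafification unit of the constant sheaf. -/
abbrev etaC (k : Type) [Field k] (X : TopCat.{0}) : constPresh k X ⟶ (CSh k X).val :=
  CategoryTheory.toSheafify _ _

variable [Field k] {X : TopCat.{0}}

lemma etaC_res {W V : Opens X} (i : W ⟶ V) (t : k) :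
    (CSh k X).val.map i.op ((etaC k X).app (op V) t) = (etaC k X).app (op W) t := by
  have h := (etaC k X).naturality i.op
  have h2 := ConcreteCategory.congr_hom h t
  simpa using h2.symm

lemma etaC_inj {V : Opens X} (hV : (V : Set X).Nonempty) :
    Function.Injective ((etaC k X).app (op V)) := by
  intro t t' h
  have hli : CategoryTheory.Presheaf.IsLocallyInjective
      (Opens.grothendieckTopology X) (etaC k X) := (inferInstance : CategoryTheory.Presheaf.IsLocallyInjective
      (Opens.grothendieckTopology X) (CategoryTheory.toSheafify _ (constPresh k X)))
  have hmem := hli.equalizerSieve_mem (X := op V) (x := t) (y := t') h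
  obtain ⟨x, hx⟩ := hV
  obtain ⟨W, i, hSi, hxW⟩ := hmem x hx
  simpa using hSi

lemma etaC_locsurj {V : Opens X} (s : (CSh k X).val.obj (op V)) {x : X} (hx : x ∈ V) :
    ∃ (W : Opens X) (i : W ⟶ V), x ∈ W ∧ ∃ t : k,
      (etaC k X).app (op W) t = (CSh k X).val.map i.op s := by
  have hls : CategoryTheory.Presheaf.IsLocallySurjective
      (Opens.grothendieckTopology X) (etaC k X) := (inferInstance : CategoryTheory.Presheaf.IsLocallySurjective
      (Opens.grothendieckTopology X) (CategoryTheory.toSheafify _ (constPresh k X)))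
  obtain ⟨W, i, hSi, hxW⟩ := hls.imageSieve_mem s x hx
  exact ⟨W, i, hxW, hSi⟩

lemma sections_subsingleton_of_empty (F : TopCat.Sheaf (ModuleCat.{0} k) X)
    {V : Opens X} (hV : (V : Set X) = ∅) : Subsingleton (F.val.obj (op V)) := by
  constructor
  intro s t
  apply TopCat.Sheaf.eq_of_locally_eq' F (fun i : Empty => i.elim) V (fun i => i.elim)
  · intro x hx
    exact absurd (show x ∈ (V : Set X) from hx) (by rw [hV]; simp)
  · intro i; exact i.elim

lemma etaC_top_surj [Nonempty X] [PreconnectedSpace X] :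
    Function.Surjective ((etaC k X).app (op (⊤ : Opens X))) := by
  intro s
  have hloc : ∀ x : X, ∃ (W : Opens X) (i : W ⟶ ⊤), x ∈ W ∧ ∃ t : k,
      (etaC k X).app (op W) t = (CSh k X).val.map i.op s :=
    fun x => etaC_locsurj s (by trivial)
  choose W iW hxW t ht using hloc
  have key : ∀ x y : X, y ∈ W x → t y = t x := by
    intro x y hyWx
    have h1 : (CSh k X).val.map (homOfLE (inf_le_left : W x ⊓ W y ≤ W x)).op
        ((etaC k X).app (op (W x)) (t x)) =
        (CSh k X).val.map (homOfLE (inf_le_right : W x ⊓ W y ≤ W y)).op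
        ((etaC k X).app (op (W y)) (t y)) := by
      rw [ht, ht]
      rw [← LinearMap.comp_apply, ← LinearMap.comp_apply]
      show ((CSh k X).val.map _ ≫ (CSh k X).val.map _) s = (((CSh k X).val.map _) ≫ _) s
      rw [← Functor.map_comp, ← Functor.map_comp]
      rfl
    rw [etaC_res, etaC_res] at h1
    exact (etaC_inj (V := W x ⊓ W y) ⟨y, hyWx, hxW y⟩ h1.symm)
  have hlc : IsLocallyConstant t := by
    rw [IsLocallyConstant.iff_exists_open]
    intro x
    exact ⟨W x, (W x).2, hxW x, fun y hy => key x y hy⟩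
  obtain ⟨x₀⟩ := ‹Nonempty X›
  refine ⟨t x₀, ?_⟩
  apply TopCat.Sheaf.eq_of_locally_eq' (CSh k X) W ⊤ iW
    (fun x _ => Opens.mem_iSup.2 ⟨x, hxW x⟩)
  intro x
  exact (etaC_res (iW x) (t x₀)).trans
    (by rw [(hlc.apply_eq_of_preconnectedSpace x₀ x : t x₀ = t x)]; exact ht x)

/-- Determination: two morphisms out of the pushforward of a constant sheaf along a
closed-type inclusion agree as soon as they agree on the unit global section. -/
lemma det {Y : TopCat.{0}} (f : X ⟶ Y) (u : Opens X → Opens Y)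
    (hu : ∀ V, (Opens.map f).obj (u V) = V) (hcl : IsOpen ((Set.range f)ᶜ))
    {G : TopCat.Sheaf (ModuleCat.{0} k) Y}
    (φ ψ : (TopCat.Sheaf.pushforward (ModuleCat.{0} k) f).obj (CSh k X) ⟶ G)
    (h : φ.hom.app (op ⊤) ((etaC k X).app (op ((Opens.map f).obj ⊤)) (1:k)) =
         ψ.hom.app (op ⊤) ((etaC k X).app (op ((Opens.map f).obj ⊤)) (1:k))) : φ = ψ := by
  have hagree : ∀ (U : Opens Y) (t : k),
      φ.hom.app (op U) ((etaC k X).app (op ((Opens.map f).obj U)) t) =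
      ψ.hom.app (op U) ((etaC k X).app (op ((Opens.map f).obj U)) t) := by
    intro U t
    have e1 : (etaC k X).app (op ((Opens.map f).obj U)) t
        = t • (etaC k X).app (op ((Opens.map f).obj U)) (1:k) := by
      rw [← map_smul, smul_eq_mul, mul_one]
    have e2 : (etaC k X).app (op ((Opens.map f).obj U)) (1:k)
        = ((TopCat.Sheaf.pushforward (ModuleCat.{0} k) f).obj (CSh k X)).val.map
            (homOfLE (le_top : U ≤ ⊤)).op
            ((etaC k X).app (op ((Opens.map f).obj ⊤)) (1:k)) :=
      (etaC_res ((Opens.map f).map (homOfLE le_top)) (1:k)).symm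
    have nφ := ConcreteCategory.congr_hom (φ.hom.naturality (homOfLE (le_top : U ≤ ⊤)).op)
      ((etaC k X).app (op ((Opens.map f).obj ⊤)) (1:k))
    have nψ := ConcreteCategory.congr_hom (ψ.hom.naturality (homOfLE (le_top : U ≤ ⊤)).op)
      ((etaC k X).app (op ((Opens.map f).obj ⊤)) (1:k))
    simp only [ConcreteCategory.comp_apply] at nφ nψ
    rw [e1]
    refine (LinearMap.map_smul _ _ _).trans
      ((congrArg (t • ·) ?_).trans (LinearMap.map_smul _ _ _).symm)
    exact (congrArg (fun x => φ.hom.app (op U) x) e2).trans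
      ((nφ.trans ((congrArg (fun x => G.val.map (homOfLE (le_top : U ≤ ⊤)).op x) h).trans
        nψ.symm)).trans (congrArg (fun x => ψ.hom.app (op U) x) e2).symm)
  apply CategoryTheory.Sheaf.hom_ext
  ext ⟨U⟩ s
  classical
  choose Wt iW hmem t hts using
    fun (x : X) (hx : x ∈ (Opens.map f).obj U) => etaC_locsurj s hx
  let P : Y → Prop := fun y => ∃ x : X, f x = y ∧ x ∈ (Opens.map f).obj U
  let W : Y → Opens Y := fun y =>
    if hy : P y then u (Wt hy.choose hy.choose_spec.2) ⊓ U
    else U ⊓ ⟨(Set.range f)ᶜ, hcl⟩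
  have hWU : ∀ y, W y ≤ U := by
    intro y
    by_cases hy : P y
    · simp only [W, dif_pos hy]; exact inf_le_right
    · simp only [W, dif_neg hy]; exact inf_le_left
  apply TopCat.Sheaf.eq_of_locally_eq' G W U (fun y => homOfLE (hWU y))
  · intro y hy
    show y ∈ iSup W
    rw [Opens.mem_iSup]
    refine ⟨y, ?_⟩
    by_cases hP : P y
    · have hx := hP.choose_spec
      simp only [W, dif_pos hP]
      refine ⟨?_, hy⟩
      have hm : f hP.choose ∈ u (Wt hP.choose hx.2) := by
        have : hP.choose ∈ (Opens.map f).obj (u (Wt hP.choose hx.2)) := by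
          rw [hu]; exact hmem _ _
        exact this
      exact Set.mem_of_eq_of_mem hx.1.symm hm
    · simp only [W, dif_neg hP]
      refine ⟨hy, fun hrange => ?_⟩
      obtain ⟨x, hxy⟩ := hrange
      exact hP ⟨x, hxy, show f x ∈ U by rw [hxy]; exact hy⟩
  · intro y
    have nφ := ConcreteCategory.congr_hom (φ.hom.naturality (homOfLE (hWU y)).op) s
    have nψ := ConcreteCategory.congr_hom (ψ.hom.naturality (homOfLE (hWU y)).op) s
    simp only [ConcreteCategory.comp_apply] at nφ nψ
    have heq : φ.hom.app (op (W y))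
        (((TopCat.Sheaf.pushforward (ModuleCat.{0} k) f).obj (CSh k X)).val.map
          (homOfLE (hWU y)).op s)
        = ψ.hom.app (op (W y))
        (((TopCat.Sheaf.pushforward (ModuleCat.{0} k) f).obj (CSh k X)).val.map
          (homOfLE (hWU y)).op s) := by
      by_cases hP : P y
      · have hx := hP.choose_spec
        have hEq : (Opens.map f).obj (W y) = Wt hP.choose hx.2 := by
          apply Opens.ext
          show f ⁻¹' (W y : Set Y) = _
          have h1 : (W y : Set Y) = (u (Wt hP.choose hx.2) : Set Y) ∩ (U : Set Y) := by
            simp only [W, dif_pos hP]; rfl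
          rw [h1, Set.preimage_inter]
          have h2 : f ⁻¹' (u (Wt hP.choose hx.2) : Set Y) = (Wt hP.choose hx.2 : Set X) :=
            congrArg Opens.carrier (hu (Wt hP.choose hx.2))
          rw [h2]
          apply Set.inter_eq_left.mpr
          exact fun x hxW => (iW hP.choose hx.2).le hxW
        have hcomp : (Opens.map f).map (homOfLE (hWU y)) = eqToHom hEq ≫ iW hP.choose hx.2 :=
          Subsingleton.elim _ _
        have hs' : ((TopCat.Sheaf.pushforward (ModuleCat.{0} k) f).obj (CSh k X)).val.map
            (homOfLE (hWU y)).op s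
            = (etaC k X).app (op ((Opens.map f).obj (W y))) (t hP.choose hx.2) := by
          show (CSh k X).val.map ((Opens.map f).map (homOfLE (hWU y))).op s = _
          rw [hcomp]
          have : ((eqToHom hEq ≫ iW hP.choose hx.2).op) =
              (iW hP.choose hx.2).op ≫ (eqToHom hEq).op := rfl
          rw [this, Functor.map_comp]
          show (CSh k X).val.map (eqToHom hEq).op ((CSh k X).val.map (iW hP.choose hx.2).op s) = _
          rw [← hts hP.choose hx.2]
          exact etaC_res (eqToHom hEq) _
        rw [hs']
        exact hagree (W y) _
      · have hemp : (((Opens.map f).obj (W y)) : Set X) = ∅ := by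
          show f ⁻¹' (W y : Set Y) = ∅
          have h1 : (W y : Set Y) = (U : Set Y) ∩ (Set.range f)ᶜ := by
            simp only [W, dif_neg hP]; rfl
          rw [h1]
          ext x
          simp only [Set.mem_preimage, Set.mem_inter_iff, Set.mem_compl_iff,
            Set.mem_empty_iff_false, iff_false, not_and]
          intro _ hc
          exact hc ⟨x, rfl⟩
        have hsub : Subsingleton
            ((((TopCat.Sheaf.pushforward (ModuleCat.{0} k) f).obj (CSh k X)).val.obj
              (op (W y)))) :=
          sections_subsingleton_of_empty (CSh k X) hemp
        rw [@Subsingleton.elim _ hsub (((TopCat.Sheaf.pushforward (ModuleCat.{0} k) f).obj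
          (CSh k X)).val.map (homOfLE (hWU y)).op s) 0, map_zero, map_zero]
    exact nφ.symm.trans (heq.trans nψ)

/-- The set underlying the canonical open of `ℝ` restricting to a given open of `[t,∞)`. -/
def uIciSet (t : ℝ) (V : Opens (IciSp t)) : Set ℝ :=
  Subtype.val '' ((V : Set (IciSp t)) : Set (Set.Ici t)) ∪ Set.Iio t

/-- The canonical open of `ℝ` restricting to a given open of `[t,∞)`. -/
def uIci (t : ℝ) (V : Opens (IciSp t)) : Opens (TopCat.of ℝ) :=
  ⟨uIciSet t V, by
    obtain ⟨W, hW, hWV⟩ := isOpen_induced_iff.mp V.2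
    have himg : Subtype.val '' ((V : Set (IciSp t)) : Set (Set.Ici t)) = W ∩ Set.Ici t := by
      have : (V : Set (IciSp t)) = Subtype.val ⁻¹' W := by
        ext x; rw [hWV]; rfl
      rw [this, Subtype.image_preimage_coe]
      exact Set.inter_comm _ _
    show IsOpen (Subtype.val '' ((V : Set (IciSp t)) : Set (Set.Ici t)) ∪ Set.Iio t)
    rw [himg, Set.inter_union_distrib_right, Set.union_comm (Set.Ici t), Set.Iio_union_Ici,
      Set.inter_univ]
    exact hW.union isOpen_Iio⟩

lemma uIci_spec (t : ℝ) (V : Opens (IciSp t)) :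
    (Opens.map (inclIci t)).obj (uIci t V) = V := by
  apply Opens.ext
  show Subtype.val ⁻¹' (uIciSet t V) = _
  rw [uIciSet]
  ext x
  simp only [Set.mem_preimage, Set.mem_union, Set.mem_Iio, SetLike.mem_coe]
  constructor
  · rintro (hx | hx)
    · obtain ⟨y, hy, hyx⟩ := hx
      rwa [← Subtype.coe_injective hyx]
    · exact absurd hx (not_lt.mpr x.2)
  · intro hx
    exact Or.inl ⟨x, hx, rfl⟩

lemma uIci_closed (t : ℝ) : IsOpen ((Set.range (inclIci t : IciSp t ⟶ TopCat.of ℝ))ᶜ) := by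
  have h1 : Set.range (inclIci t : IciSp t ⟶ TopCat.of ℝ) = Set.Ici t := Subtype.range_val
  rw [h1]
  show IsOpen ((Set.Ici t)ᶜ)
  rw [Set.compl_Ici]
  exact isOpen_Iio

/-- `(-∞, a)` as an open of `ℝ`. -/
def IioOpen (a : ℝ) : Opens (TopCat.of ℝ) :=
  ⟨show Set ℝ from Set.Iio a, by show IsOpen (Set.Iio a); exact isOpen_Iio⟩

instance (a : ℝ) : Nonempty (IciSp a) := ⟨⟨a, le_refl a⟩⟩

instance (a : ℝ) : PreconnectedSpace (IciSp a) :=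
  Subtype.preconnectedSpace isPreconnected_Ici

end Aux

/-- For all real numbers `a` and `c`, the `k`-vector space `Hom_Sh(k_{[a,inf)}, k_{[c,inf)})` is
one-dimensional (isomorphic to `k`) if `a <= c`, and is zero if `c < a`. -/
theorem hom_kIci_kIci (k : Type) [Field k] (a c : ℝ) :
    (a ≤ c → Nonempty ((kIci k a ⟶ kIci k c) ≃ₗ[k] k)) ∧
    (c < a → Subsingleton (kIci k a ⟶ kIci k c)) := by
  constructor
  · -- case a ≤ c
    intro h
    let mu : constPresh k (IciSp a) ⟶
        ((TopCat.Sheaf.pushforward (ModuleCat.{0} k) (inclIciIci h)).obj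
          (CSh k (IciSp c))).val :=
      Functor.whiskerLeft (Opens.map (inclIciIci h)).op (etaC k (IciSp c))
    let ρ' : constIci k a ⟶
        (TopCat.Sheaf.pushforward (ModuleCat.{0} k) (inclIciIci h)).obj (CSh k (IciSp c)) :=
      ⟨CategoryTheory.sheafifyLift _ mu
        ((TopCat.Sheaf.pushforward (ModuleCat.{0} k) (inclIciIci h)).obj
          (CSh k (IciSp c))).cond⟩
    let ρ : kIci k a ⟶ kIci k c :=
      (TopCat.Sheaf.pushforward (ModuleCat.{0} k) (inclIci a)).map ρ'
    let E : (kIci k a ⟶ kIci k c) →ₗ[k] (CSh k (IciSp c)).val.obj (Opposite.op (⊤ : Opens (IciSp c))) :=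
      { toFun := fun χ => χ.hom.app (Opposite.op ⊤)
          ((etaC k (IciSp a)).app (Opposite.op ((Opens.map (inclIci a)).obj ⊤)) (1:k))
        map_add' := fun χ ψ => rfl
        map_smul' := fun t χ => rfl }
    have hEρ : E ρ = (etaC k (IciSp c)).app (Opposite.op (⊤ : Opens (IciSp c))) (1:k) := by
      have hfac := CategoryTheory.toSheafify_sheafifyLift
        (Opens.grothendieckTopology (IciSp a)) mu
        ((TopCat.Sheaf.pushforward (ModuleCat.{0} k) (inclIciIci h)).obj
          (CSh k (IciSp c))).cond
      have happ := ConcreteCategory.congr_hom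
        (congrArg (fun (f : constPresh k (IciSp a) ⟶ _) =>
          f.app (Opposite.op ((Opens.map (inclIci a)).obj ⊤))) hfac) (1:k)
      exact happ
    have hinj : Function.Injective E := by
      intro χ ψ hh
      exact det (inclIci a) (uIci a) (uIci_spec a) (uIci_closed a) χ ψ hh
    have hsurj : Function.Surjective E := by
      intro z
      obtain ⟨w, hw⟩ := etaC_top_surj (k := k) (X := IciSp c) z
      refine ⟨(show k from w) • ρ, ?_⟩
      have e := ((etaC k (IciSp c)).app (Opposite.op (⊤ : Opens (IciSp c)))).hom.map_smul
        (show k from w) (1:k)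
      have e2 := E.map_smul (show k from w) ρ
      rw [e2, hEρ, ← e, smul_eq_mul, mul_one]
      exact hw
    exact ⟨(LinearEquiv.ofBijective E ⟨hinj, hsurj⟩).trans
      ((LinearEquiv.ofBijective
        ((etaC k (IciSp c)).app (Opposite.op (⊤ : Opens (IciSp c)))).hom
        ⟨etaC_inj (k := k) (X := IciSp c) ⟨⟨c, le_refl c⟩, Set.mem_univ _⟩,
          etaC_top_surj (k := k) (X := IciSp c)⟩).symm)⟩
  · -- case c < a
    intro h
    constructor
    intro φ ψ
    have key : ∀ χ : kIci k a ⟶ kIci k c,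
        χ.hom.app (Opposite.op (⊤ : Opens (TopCat.of ℝ)))
          ((etaC k (IciSp a)).app (Opposite.op ((Opens.map (inclIci a)).obj ⊤)) (1:k)) = 0 := by
      intro χ
      obtain ⟨u₀, hu₀⟩ := etaC_top_surj (k := k) (X := IciSp c)
        (χ.hom.app (Opposite.op (⊤ : Opens (TopCat.of ℝ)))
          ((etaC k (IciSp a)).app (Opposite.op ((Opens.map (inclIci a)).obj ⊤)) (1:k)))
      let U₀ : Opens (TopCat.of ℝ) := IioOpen a
      have nχ := ConcreteCategory.congr_hom (χ.hom.naturality (homOfLE (le_top : U₀ ≤ ⊤)).op)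
        ((etaC k (IciSp a)).app (Opposite.op ((Opens.map (inclIci a)).obj ⊤)) (1:k))
      simp only [ConcreteCategory.comp_apply] at nχ
      have hempty : (((Opens.map (inclIci a)).obj U₀) : Set (IciSp a)) = ∅ := by
        ext x
        simp only [Set.mem_empty_iff_false, iff_false]
        intro hx
        exact absurd (show x.1 < a from hx) (not_lt.mpr x.2)
      have hsub : Subsingleton ((kIci k a).val.obj (Opposite.op U₀)) :=
        sections_subsingleton_of_empty (CSh k (IciSp a)) hempty
      have hz : (kIci k a).val.map (homOfLE (le_top : U₀ ≤ ⊤)).op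
          ((etaC k (IciSp a)).app (Opposite.op ((Opens.map (inclIci a)).obj ⊤)) (1:k)) = 0 :=
        @Subsingleton.elim _ hsub _ _
      replace nχ := (congrArg (fun y => χ.hom.app (Opposite.op U₀) y) hz).symm.trans nχ
      rw [map_zero] at nχ
      -- now 0 = restriction of the image section
      have hres : (kIci k c).val.map (homOfLE (le_top : U₀ ≤ ⊤)).op
          (χ.hom.app (Opposite.op (⊤ : Opens (TopCat.of ℝ)))
            ((etaC k (IciSp a)).app (Opposite.op ((Opens.map (inclIci a)).obj ⊤)) (1:k)))
          = (etaC k (IciSp c)).app (Opposite.op ((Opens.map (inclIci c)).obj U₀)) u₀ := by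
        rw [← hu₀]
        exact etaC_res (k := k) (X := IciSp c) ((Opens.map (inclIci c)).map (homOfLE le_top)) u₀
      replace nχ := nχ.trans hres
      have hne : (((Opens.map (inclIci c)).obj U₀) : Set (IciSp c)).Nonempty :=
        ⟨⟨c, le_refl c⟩, show (c : ℝ) < a from h⟩
      have hu0 : u₀ = 0 := by
        apply etaC_inj (k := k) (X := IciSp c) hne
        rw [← nχ, map_zero]
        rfl
      rw [← hu₀, hu0, map_zero]
      rfl
    exact det (inclIci a) (uIci a) (uIci_spec a) (uIci_closed a) φ ψ
      ((key φ).trans (key ψ).symm)
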